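/- Let φ = e*_J ∧ e*_{n+1} ∧ e*_{n+2} (with J ⊂ {1,…,n} of size p−2) and ψ a p-form on ℝ^{n+2} involving only the coordinates e₁,…,e_n. Let ξ be a unit simple p-vector written in canonical form with respect to V = span{e_{n+1}, e_{n+2}}, with exactly two factors of the form cos θᵢ eᵢ' + sin θᵢ gᵢ (eᵢ' ∈ V unit orthonormal, gᵢ ∈ V^⊥ unit orthonormal) and remaining factors g₃,…,g_p ∈ V^⊥. Then |(φ+ψ)(ξ)| ≤ cos θ₁ cos θ₂ |φ(e₁', e₂', g₃,…,g_p)| + sin θ₁ sin θ₂ |ψ(g₁,…,g_p)| ≤ cos(θ₁ − θ₂) · max{1, ‖ψ‖*} ≤ max{1, ‖ψ‖*}. -/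

import Mathlib

noncomputable def comass {W : Type*} [AddCommGroup W] [Module ℝ W] {p : ℕ}
    (φ : W [⋀^Fin p]→ₗ[ℝ] ℝ) (g : W →ₗ[ℝ] W →ₗ[ℝ] ℝ) : ℝ :=
  sSup {c | ∃ v : Fin p → W,
    (Matrix.of fun i j : Fin p => g (v i) (v j)).det = 1 ∧ φ v = c}

noncomputable def stdG (n : ℕ) : (Fin n → ℝ) →ₗ[ℝ] (Fin n → ℝ) →ₗ[ℝ] ℝ :=
  LinearMap.mk₂ ℝ (fun x y => ∑ i, x i * y i)
    (fun x₁ x₂ y => by simp [add_mul, Finset.sum_add_distrib])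
    (fun c x y => by simp [Finset.mul_sum, mul_assoc])
    (fun x y₁ y₂ => by simp [mul_add, Finset.sum_add_distrib])
    (fun c x y => by
      simp only [Pi.smul_apply, smul_eq_mul, Finset.mul_sum]
      exact Finset.sum_congr rfl fun i _ => by ring)

noncomputable def axisForm {n p : ℕ} (I : Fin p → Fin n) :
    (Fin n → ℝ) [⋀^Fin p]→ₗ[ℝ] ℝ :=
  ((Pi.basisFun ℝ (Fin p)).det).compLinearMap (LinearMap.funLeft ℝ ℝ I)

def phiIdx (n q : ℕ) (J : Fin q → Fin n) : Fin (q + 2) → Fin (n + 2) :=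
  Fin.snoc (Fin.snoc (fun i => Fin.castLE (Nat.le_add_right n 2) (J i))
    (⟨n, by omega⟩ : Fin (n + 2))) (⟨n + 1, by omega⟩ : Fin (n + 2))

lemma stdG_apply {N : ℕ} (x y : Fin N → ℝ) : stdG N x y = ∑ i, x i * y i := rfl

lemma alt_map_combination {N p : ℕ} (Ψ : (Fin N → ℝ) [⋀^Fin p]→ₗ[ℝ] ℝ)
    (R : Matrix (Fin p) (Fin p) ℝ) (u : Fin p → (Fin N → ℝ)) :
    Ψ (fun i => ∑ j, R i j • u j) = R.det * Ψ u := by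
  classical
  set ρ : (Fin p → ℝ) →ₗ[ℝ] (Fin N → ℝ) := Fintype.linearCombination ℝ u with hρ
  have h1 : Ψ (fun i => ∑ j, R i j • u j) = (Ψ.compLinearMap ρ) (fun i => R i) := by
    simp [AlternatingMap.compLinearMap_apply, hρ, Fintype.linearCombination_apply]
  have h := (Ψ.compLinearMap ρ).eq_smul_basis_det (Pi.basisFun ℝ (Fin p))
  rw [h1, h]
  simp only [AlternatingMap.smul_apply, smul_eq_mul, Pi.basisFun_det]
  have h2 : (Ψ.compLinearMap ρ) (Pi.basisFun ℝ (Fin p)) = Ψ u := by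
    simp [AlternatingMap.compLinearMap_apply, hρ, Pi.basisFun_apply,
      Fintype.linearCombination_apply_single]
  have h3 : (Matrix.detRowAlternating (fun i => R i) : ℝ) = R.det := rfl
  rw [h2, h3, mul_comm]

lemma alt_bound {N p : ℕ} (Ψ : (Fin N → ℝ) [⋀^Fin p]→ₗ[ℝ] ℝ)
    (u : Fin p → (Fin N → ℝ)) (hu : ∀ i k, |u i k| ≤ 1) :
    |Ψ u| ≤ ∑ r : Fin p → Fin N, |Ψ (fun i => Pi.single (r i) (1:ℝ))| := by
  classical
  have h0 : u = fun i => ∑ k, u i k • (Pi.single k (1:ℝ) : Fin N → ℝ) := by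
    funext i
    ext m
    simp [Finset.sum_apply, Pi.single_apply, mul_ite, Finset.sum_ite_eq]
  have hexp : Ψ u = ∑ r : Fin p → Fin N,
      (∏ i, u i (r i)) • Ψ (fun i => Pi.single (r i) (1:ℝ)) := by
    conv_lhs => rw [h0]
    have := Ψ.toMultilinearMap.map_sum
      (g := fun i k => u i k • (Pi.single k (1:ℝ) : Fin N → ℝ))
    simp only [AlternatingMap.coe_multilinearMap] at this
    rw [this]
    refine Finset.sum_congr rfl fun r _ => ?_
    have := Ψ.toMultilinearMap.map_smul_univ (fun i => u i (r i))
      (fun i => (Pi.single (r i) (1:ℝ) : Fin N → ℝ))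
    simpa using this
  rw [hexp]
  refine (Finset.abs_sum_le_sum_abs _ _).trans ?_
  refine Finset.sum_le_sum fun r _ => ?_
  rw [smul_eq_mul, abs_mul]
  refine mul_le_of_le_one_left (abs_nonneg _) ?_
  rw [Finset.abs_prod]
  exact Finset.prod_le_one (fun i _ => abs_nonneg _) (fun i _ => hu i (r i))
open Matrix

lemma psd_tfactor {a b : ℕ} (A : Matrix (Fin a) (Fin b) ℝ) : (Aᵀ * A).PosSemidef := by
  refine PosSemidef.of_dotProduct_mulVec_nonneg ?_ ?_
  · ext i j
    simp only [conjTranspose_apply, mul_apply, transpose_apply, star_trivial]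
    exact Finset.sum_congr rfl fun k _ => mul_comm _ _
  · intro x
    have h1 : star x = x := by simp
    rw [h1, ← mulVec_mulVec, dotProduct_mulVec, vecMul_transpose]
    exact Finset.sum_nonneg fun i _ => mul_self_nonneg _

lemma psd_det_nonneg {m : ℕ} {S : Matrix (Fin m) (Fin m) ℝ} (hS : S.PosSemidef) :
    0 ≤ S.det := by
  have h := hS.1.det_eq_prod_eigenvalues
  have h2 : S.det = ∏ i, hS.1.eigenvalues i := by
    rw [h]; norm_num
  rw [h2]
  exact Finset.prod_nonneg fun i _ => hS.eigenvalues_nonneg i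

lemma det_le_one_of_psd {m : ℕ} {S : Matrix (Fin m) (Fin m) ℝ}
    (hS : S.PosSemidef) (h1 : (1 - S).PosSemidef) : S.det ≤ 1 := by
  have hH := hS.1
  have h2 : S.det = ∏ i, hH.eigenvalues i := by
    rw [hH.det_eq_prod_eigenvalues]; norm_num
  rw [h2]
  refine Finset.prod_le_one (fun i _ => hS.eigenvalues_nonneg i) (fun i _ => ?_)
  set x : EuclideanSpace ℝ (Fin m) := hH.eigenvectorBasis i with hx
  have hnorm : ‖x‖ = 1 := hH.eigenvectorBasis.orthonormal.1 i
  have hxx : (⇑x) ⬝ᵥ (⇑x) = 1 := by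
    have h3 : (inner ℝ x x : ℝ) = ‖x‖ ^ 2 := real_inner_self_eq_norm_sq x
    rw [hnorm] at h3
    rw [show ((⇑x) ⬝ᵥ (⇑x) : ℝ) = (inner ℝ x x : ℝ) by
      rw [PiLp.inner_apply]; simp [dotProduct, sq], h3]
    norm_num
  have hq := h1.dotProduct_mulVec_nonneg (⇑x)
  rw [star_trivial, sub_mulVec, one_mulVec, hH.mulVec_eigenvectorBasis i,
    dotProduct_sub, dotProduct_smul, ← hx, hxx] at hq
  simp only [smul_eq_mul, mul_one] at hq
  linarith

lemma abs_det_mul_transpose_le_one {p N : ℕ} (P Q : Matrix (Fin p) (Fin N) ℝ)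
    (hP : P * Pᵀ = 1) (hQ : Q * Qᵀ = 1) : |(P * Qᵀ).det| ≤ 1 := by
  set M := P * Qᵀ with hM
  have hMMt : M * Mᵀ = P * ((Qᵀ * Q) * Pᵀ) := by
    rw [hM, transpose_mul, transpose_transpose, Matrix.mul_assoc P Qᵀ (Q * Pᵀ),
      ← Matrix.mul_assoc Qᵀ Q Pᵀ]
  have hRT : (Qᵀ * Q)ᵀ = Qᵀ * Q := by rw [transpose_mul, transpose_transpose]
  have hR : (Qᵀ * Q) * (Qᵀ * Q) = Qᵀ * Q := by
    rw [Matrix.mul_assoc Qᵀ Q (Qᵀ * Q), ← Matrix.mul_assoc Q Qᵀ Q, hQ, Matrix.one_mul]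
  have hpsdS : (M * Mᵀ).PosSemidef := by
    have h : M * Mᵀ = (Mᵀ)ᵀ * Mᵀ := by rw [transpose_transpose]
    rw [h]; exact psd_tfactor _
  have hpsd1 : (1 - M * Mᵀ).PosSemidef := by
    have h5 : (1 - Qᵀ * Q) * (1 - Qᵀ * Q) = 1 - Qᵀ * Q := by
      simp only [Matrix.sub_mul, Matrix.mul_sub, Matrix.mul_one, Matrix.one_mul, hR]
      abel
    have key : 1 - M * Mᵀ = ((1 - Qᵀ * Q) * Pᵀ)ᵀ * ((1 - Qᵀ * Q) * Pᵀ) := by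
      conv_rhs => rw [transpose_mul, transpose_transpose, transpose_sub, transpose_one, hRT,
        Matrix.mul_assoc P (1 - Qᵀ * Q) ((1 - Qᵀ * Q) * Pᵀ),
        ← Matrix.mul_assoc (1 - Qᵀ * Q) (1 - Qᵀ * Q) Pᵀ, h5,
        Matrix.sub_mul, Matrix.one_mul, Matrix.mul_sub, hP]
      rw [hMMt]
    rw [key]; exact psd_tfactor _
  have hdet : (M * Mᵀ).det ≤ 1 := det_le_one_of_psd hpsdS hpsd1
  have hsq : M.det ^ 2 = (M * Mᵀ).det := by rw [det_mul, det_transpose, sq]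
  nlinarith [abs_nonneg M.det, sq_abs M.det]

lemma stdG_comm {N : ℕ} (x y : Fin N → ℝ) : stdG N x y = stdG N y x := by
  rw [stdG_apply, stdG_apply]
  exact Finset.sum_congr rfl fun k _ => mul_comm _ _

open Matrix in
lemma stdG_sum_sum {N p : ℕ} (c d : Fin p → ℝ) (w : Fin p → (Fin N → ℝ)) :
    stdG N (∑ j, c j • w j) (∑ l, d l • w l)
      = ∑ j, ∑ l, c j * d l * stdG N (w j) (w l) := by
  have h : ∀ y, stdG N (∑ j, c j • w j) y = ∑ j, c j * stdG N (w j) y := by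
    intro y
    rw [map_sum, LinearMap.sum_apply]
    exact Finset.sum_congr rfl fun j _ => by rw [_root_.map_smul, LinearMap.smul_apply, smul_eq_mul]
  rw [h]
  refine Finset.sum_congr rfl fun j _ => ?_
  rw [map_sum, Finset.mul_sum]
  refine Finset.sum_congr rfl fun l _ => ?_
  rw [_root_.map_smul, smul_eq_mul]
  ring

open scoped MatrixOrder
open Matrix in
lemma comass_bound {N p : ℕ} (Ψ : (Fin N → ℝ) [⋀^Fin p]→ₗ[ℝ] ℝ)
    (v : Fin p → (Fin N → ℝ))
    (hv : (Matrix.of fun i j : Fin p => stdG N (v i) (v j)).det = 1) :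
    |Ψ v| ≤ ∑ r : Fin p → Fin N, |Ψ (fun i => Pi.single (r i) (1:ℝ))| := by
  classical
  set G : Matrix (Fin p) (Fin p) ℝ := Matrix.of fun i j => stdG N (v i) (v j) with hGdef
  have hGsym : ∀ i j, G i j = G j i := fun i j => stdG_comm _ _
  have hG : G.PosSemidef := by
    refine PosSemidef.of_dotProduct_mulVec_nonneg ?_ ?_
    · ext i j
      rw [conjTranspose_apply, star_trivial, hGsym]
    · intro x
      rw [star_trivial]
      have h1 : x ⬝ᵥ (G *ᵥ x) = stdG N (∑ i, x i • v i) (∑ j, x j • v j) := by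
        rw [stdG_sum_sum]
        simp only [dotProduct, mulVec, dotProduct]
        refine Finset.sum_congr rfl fun j _ => ?_
        rw [Finset.mul_sum]
        refine Finset.sum_congr rfl fun l _ => ?_
        show x j * (G j l * x l) = x j * x l * G j l
        ring
      rw [h1, stdG_apply]
      exact Finset.sum_nonneg fun k _ => mul_self_nonneg _
  set S := CFC.sqrt G with hSdef
  have hS2 : S * S = G := CFC.sqrt_mul_sqrt_self G hG.nonneg
  have hSsym : Sᵀ = S := by
    have h := (CFC.sqrt_nonneg G).posSemidef.1
    ext i j
    have h2 := congrFun (congrFun h i) j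
    rw [conjTranspose_apply, star_trivial] at h2
    exact h2
  have hSd : S.det = 1 := by
    have h2 : S.det * S.det = 1 := by rw [← det_mul, hS2]; exact hv
    have h0 : 0 ≤ S.det := psd_det_nonneg (CFC.sqrt_nonneg G).posSemidef
    nlinarith
  have hunit : IsUnit S.det := by rw [hSd]; exact isUnit_one
  set Qi := S⁻¹ with hQidef
  have hQS : Qi * S = 1 := S.nonsing_inv_mul hunit
  have hSQ : S * Qi = 1 := S.mul_nonsing_inv hunit
  set u : Fin p → (Fin N → ℝ) := fun i => ∑ j, Qi i j • v j with hudef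
  have collapse : ∀ (A B : Matrix (Fin p) (Fin p) ℝ) (i : Fin p),
      (∑ j, A i j • ∑ l, B j l • v l) = ∑ l, (A * B) i l • v l := by
    intro A B i
    have h1 : ∀ j, A i j • ∑ l, B j l • v l = ∑ l, (A i j * B j l) • v l := by
      intro j
      rw [Finset.smul_sum]
      exact Finset.sum_congr rfl fun l _ => by rw [smul_smul]
    simp only [h1]
    rw [Finset.sum_comm]
    refine Finset.sum_congr rfl fun l _ => ?_
    rw [← Finset.sum_smul]
    rfl
  have hvu : v = fun i => ∑ j, S i j • u j := by
    funext i
    rw [show (∑ j, S i j • u j) = ∑ l, (S * Qi) i l • v l from collapse S Qi i]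
    rw [hSQ]
    simp [Matrix.one_apply, ite_smul, Finset.sum_ite_eq]
  have hΨ : Ψ v = Ψ u := by
    conv_lhs => rw [hvu]
    rw [alt_map_combination, hSd, one_mul]
  have hGram : ∀ a b, stdG N (u a) (u b) = (1 : Matrix (Fin p) (Fin p) ℝ) a b := by
    intro a b
    rw [hudef]
    simp only []
    rw [stdG_sum_sum]
    have hg : ∀ j l : Fin p, stdG N (v j) (v l) = G j l := fun j l => rfl
    have h1 : ∀ j l, Qi a j * Qi b l * stdG N (v j) (v l) = Qi a j * (G j l * Qiᵀ l b) := by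
      intro j l
      rw [hg, transpose_apply]
      ring
    simp only [h1]
    have h2 : ∑ j, ∑ l, Qi a j * (G j l * Qiᵀ l b) = (Qi * (G * Qiᵀ)) a b := by
      rw [mul_apply]
      refine Finset.sum_congr rfl fun j _ => ?_
      rw [mul_apply, Finset.mul_sum]
    rw [h2]
    have hSQt : S * Qiᵀ = 1 := by
      conv_lhs => rw [← hSsym, ← transpose_mul, hQS, transpose_one]
    have h3 : Qi * (G * Qiᵀ) = 1 := by
      rw [← hS2, Matrix.mul_assoc S S Qiᵀ, hSQt, Matrix.mul_one, hQS]
    rw [h3]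
  have hcoord : ∀ i k, |u i k| ≤ 1 := by
    intro i k
    have h1 := hGram i i
    rw [stdG_apply, Matrix.one_apply_eq] at h1
    have h2 : u i k * u i k ≤ 1 := by
      have h4 := Finset.single_le_sum (f := fun m => u i m * u i m)
        (fun m _ => mul_self_nonneg _) (Finset.mem_univ k)
      linarith
    nlinarith [abs_nonneg (u i k), abs_mul_abs_self (u i k)]
  rw [hΨ]
  exact alt_bound Ψ u hcoord

open Matrix in
lemma axisForm_apply {N p : ℕ} (I : Fin p → Fin N) (v : Fin p → (Fin N → ℝ)) :
    axisForm I v = (Matrix.of fun i j => v j (I i)).det := by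
  simp only [axisForm, AlternatingMap.compLinearMap_apply, Module.Basis.det_apply]
  congr 1

lemma phiIdx_castSucc2 {n q : ℕ} (J : Fin q → Fin n) (i : Fin q) :
    phiIdx n q J (i.castSucc.castSucc) = Fin.castLE (Nat.le_add_right n 2) (J i) := by
  simp [phiIdx, Fin.snoc_castSucc]

lemma phiIdx_q {n q : ℕ} (J : Fin q → Fin n) :
    phiIdx n q J ((Fin.last q).castSucc) = ⟨n, by omega⟩ := by
  simp [phiIdx, Fin.snoc_castSucc, Fin.snoc_last]

lemma phiIdx_last {n q : ℕ} (J : Fin q → Fin n) :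
    phiIdx n q J (Fin.last (q+1)) = ⟨n+1, by omega⟩ := by
  simp [phiIdx, Fin.snoc_last]

lemma phiIdx_val {n q : ℕ} (J : Fin q → Fin n) (i : Fin (q+2)) :
    (phiIdx n q J i : ℕ) = if h : (i : ℕ) < q then (J ⟨i, h⟩ : ℕ) else n + ((i : ℕ) - q) := by
  induction i using Fin.lastCases with
  | last =>
    rw [phiIdx_last]
    simp only [Fin.val_last]
    rw [dif_neg (by omega)]
    omega
  | cast i =>
    induction i using Fin.lastCases with
    | last =>
      rw [phiIdx_q]
      simp only [Fin.coe_castSucc, Fin.val_last]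
      rw [dif_neg (by omega)]
      omega
    | cast i =>
      rw [phiIdx_castSucc2]
      have hi : ((i.castSucc.castSucc : Fin (q+2)) : ℕ) = (i : ℕ) := rfl
      simp only [hi]
      rw [dif_pos i.isLt]
      simp

lemma phiIdx_injective {n q : ℕ} {J : Fin q → Fin n} (hJ : StrictMono J) :
    Function.Injective (phiIdx n q J) := by
  intro a b hab
  have h := congrArg Fin.val hab
  rw [phiIdx_val, phiIdx_val] at h
  split_ifs at h with h1 h2 h2
  · have hJn : J ⟨a, h1⟩ = J ⟨b, h2⟩ := Fin.ext h
    have := congrArg Fin.val (hJ.injective hJn)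
    exact Fin.ext this
  · have := (J ⟨a, h1⟩).isLt; omega
  · have := (J ⟨b, h2⟩).isLt; omega
  · have ha := a.isLt; have hb := b.isLt
    exact Fin.ext (by omega)

open Matrix in
lemma phi_vanish (n q : ℕ) (J : Fin q → Fin n) (v : Fin (q+2) → (Fin (n+2) → ℝ))
    (j0 : Fin (q+2))
    (hv : ∀ j, j ≠ j0 → ∀ i : Fin (n+2), n ≤ (i : ℕ) → v j i = 0) :
    axisForm (phiIdx n q J) v = 0 := by
  classical
  rw [axisForm_apply]
  set M : Matrix (Fin (q+2)) (Fin (q+2)) ℝ :=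
    Matrix.of fun i j => v j (phiIdx n q J i) with hMdef
  set i0 : Fin (q+2) := (Fin.last q).castSucc with hi0
  set i1 : Fin (q+2) := Fin.last (q+1) with hi1
  have hne : i0 ≠ i1 := by
    intro h
    have := congrArg Fin.val h
    simp [hi0, hi1] at this
  have hrow0 : ∀ j, j ≠ j0 → M i0 j = 0 := by
    intro j hj
    show v j (phiIdx n q J i0) = 0
    rw [phiIdx_q]
    exact hv j hj _ (le_refl n)
  have hrow1 : ∀ j, j ≠ j0 → M i1 j = 0 := by
    intro j hj
    show v j (phiIdx n q J i1) = 0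
    rw [phiIdx_last]
    exact hv j hj _ (Nat.le_succ n)
  by_cases ha : M i0 j0 = 0
  · refine Matrix.det_eq_zero_of_row_eq_zero i0 fun j => ?_
    by_cases hj : j = j0
    · rw [hj]; exact ha
    · exact hrow0 j hj
  · have hrow : M i1 = (M i1 j0 / M i0 j0) • M i0 := by
      funext j
      by_cases hj : j = j0
      · subst hj
        simp only [Pi.smul_apply, smul_eq_mul]
        field_simp
      · rw [hrow1 j hj]
        simp only [Pi.smul_apply, smul_eq_mul, hrow0 j hj, mul_zero]
    have hupd : M = M.updateRow i1 ((M i1 j0 / M i0 j0) • M i0) := by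
      rw [← hrow, Matrix.updateRow_eq_self]
    rw [hupd, Matrix.det_updateRow_smul]
    have : (M.updateRow i1 (M i0)).det = 0 := by
      refine Matrix.det_zero_of_row_eq hne ?_
      rw [Matrix.updateRow_self, Matrix.updateRow_ne hne]
    rw [this, mul_zero]
open Matrix

theorem stmt10 (n q : ℕ) (J : Fin q → Fin n) (hJ : StrictMono J)
    (ψ₀ : (Fin n → ℝ) [⋀^Fin (q + 2)]→ₗ[ℝ] ℝ)
    (θ : Fin 2 → ℝ) (hθ : ∀ j, θ j ∈ Set.Ioo 0 (Real.pi / 2))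
    (e' : Fin 2 → (Fin (n + 2) → ℝ))
    (he'V : ∀ j, ∀ i : Fin (n + 2), (i : ℕ) < n → e' j i = 0)
    (he'on : ∀ j k, stdG (n + 2) (e' j) (e' k) = if j = k then 1 else 0)
    (gv : Fin (q + 2) → (Fin (n + 2) → ℝ))
    (hgvV : ∀ j, ∀ i : Fin (n + 2), n ≤ (i : ℕ) → gv j i = 0)
    (hgvon : ∀ j k, stdG (n + 2) (gv j) (gv k) = if j = k then 1 else 0) :
    letI Φ := axisForm (phiIdx n q J)
    letI Ψ := ψ₀.compLinearMap
      (LinearMap.funLeft ℝ ℝ (Fin.castLE (Nat.le_add_right n 2)))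
    letI ξ : Fin (q + 2) → (Fin (n + 2) → ℝ) :=
      Fin.cons (Real.cos (θ 0) • e' 0 + Real.sin (θ 0) • gv 0)
        (Fin.cons (Real.cos (θ 1) • e' 1 + Real.sin (θ 1) • gv 1)
          (fun i : Fin q => gv i.succ.succ))
    letI E : Fin (q + 2) → (Fin (n + 2) → ℝ) :=
      Fin.cons (e' 0) (Fin.cons (e' 1) (fun i : Fin q => gv i.succ.succ))
    |(Φ + Ψ) ξ| ≤
        Real.cos (θ 0) * Real.cos (θ 1) * |Φ E| +
          Real.sin (θ 0) * Real.sin (θ 1) * |Ψ gv| ∧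
    Real.cos (θ 0) * Real.cos (θ 1) * |Φ E| +
        Real.sin (θ 0) * Real.sin (θ 1) * |Ψ gv| ≤
      Real.cos (θ 0 - θ 1) * max 1 (comass Ψ (stdG (n + 2))) ∧
    Real.cos (θ 0 - θ 1) * max 1 (comass Ψ (stdG (n + 2))) ≤
      max 1 (comass Ψ (stdG (n + 2))) := by
  classical
  set Φ := axisForm (phiIdx n q J) with hΦdef
  set Ψ := ψ₀.compLinearMap
      (LinearMap.funLeft ℝ ℝ (Fin.castLE (Nat.le_add_right n 2))) with hΨdef
  set ξ : Fin (q + 2) → (Fin (n + 2) → ℝ) :=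
      Fin.cons (Real.cos (θ 0) • e' 0 + Real.sin (θ 0) • gv 0)
        (Fin.cons (Real.cos (θ 1) • e' 1 + Real.sin (θ 1) • gv 1)
          (fun i : Fin q => gv i.succ.succ)) with hξdef
  set E : Fin (q + 2) → (Fin (n + 2) → ℝ) :=
      Fin.cons (e' 0) (Fin.cons (e' 1) (fun i : Fin q => gv i.succ.succ)) with hEdef
  have pi_pos := Real.pi_pos
  have hc0 : 0 < Real.cos (θ 0) :=
    Real.cos_pos_of_mem_Ioo ⟨by linarith [(hθ 0).1], (hθ 0).2⟩
  have hc1 : 0 < Real.cos (θ 1) :=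
    Real.cos_pos_of_mem_Ioo ⟨by linarith [(hθ 1).1], (hθ 1).2⟩
  have hs0 : 0 < Real.sin (θ 0) :=
    Real.sin_pos_of_pos_of_lt_pi (hθ 0).1 (by linarith [(hθ 0).2])
  have hs1 : 0 < Real.sin (θ 1) :=
    Real.sin_pos_of_pos_of_lt_pi (hθ 1).1 (by linarith [(hθ 1).2])
  set t : Fin q → (Fin (n + 2) → ℝ) := fun i => gv i.succ.succ with ht
  -- expansion of any alternating map at ξ
  have hexpand : ∀ F : (Fin (n+2) → ℝ) [⋀^Fin (q+2)]→ₗ[ℝ] ℝ,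
      F ξ = Real.cos (θ 0) * Real.cos (θ 1) * F (Fin.cons (e' 0) (Fin.cons (e' 1) t))
          + Real.cos (θ 0) * Real.sin (θ 1) * F (Fin.cons (e' 0) (Fin.cons (gv 1) t))
          + Real.sin (θ 0) * Real.cos (θ 1) * F (Fin.cons (gv 0) (Fin.cons (e' 1) t))
          + Real.sin (θ 0) * Real.sin (θ 1) * F (Fin.cons (gv 0) (Fin.cons (gv 1) t)) := by
    intro F
    have key : ∀ (x : Fin (n+2) → ℝ) (w : Fin (q+1) → (Fin (n+2) → ℝ)),
        F (Fin.cons x w) = F.curryLeft x w := fun _ _ => rfl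
    have hξ : ξ = Fin.cons (Real.cos (θ 0) • e' 0 + Real.sin (θ 0) • gv 0)
        (Fin.cons (Real.cos (θ 1) • e' 1 + Real.sin (θ 1) • gv 1) t) := rfl
    have key2 : ∀ (G : (Fin (n+2) → ℝ) [⋀^Fin (q+1)]→ₗ[ℝ] ℝ) (y : Fin (n+2) → ℝ),
        G (Fin.cons y t) = G.curryLeft y t := fun _ _ => rfl
    have step2 : ∀ y : Fin (n+2) → ℝ,
        F (Fin.cons y (Fin.cons (Real.cos (θ 1) • e' 1 + Real.sin (θ 1) • gv 1) t))
          = Real.cos (θ 1) * F (Fin.cons y (Fin.cons (e' 1) t))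
          + Real.sin (θ 1) * F (Fin.cons y (Fin.cons (gv 1) t)) := by
      intro y
      rw [key, key2, map_add, _root_.map_smul, _root_.map_smul]
      simp only [AlternatingMap.add_apply, AlternatingMap.smul_apply, smul_eq_mul]
      rw [← key2, ← key2, ← key, ← key]
    have step1 : F ξ
        = Real.cos (θ 0) * F (Fin.cons (e' 0)
            (Fin.cons (Real.cos (θ 1) • e' 1 + Real.sin (θ 1) • gv 1) t))
        + Real.sin (θ 0) * F (Fin.cons (gv 0)
            (Fin.cons (Real.cos (θ 1) • e' 1 + Real.sin (θ 1) • gv 1) t)) := by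
      rw [hξ, key, map_add, _root_.map_smul, _root_.map_smul]
      simp only [AlternatingMap.add_apply, AlternatingMap.smul_apply, smul_eq_mul,
        LinearMap.add_apply, LinearMap.smul_apply]
      rw [← key, ← key]
    rw [step1, step2, step2]
    ring
  -- tail entries of the special tuples lie in V-perp
  have htail : ∀ (z : Fin (n+2) → ℝ) (j' : Fin (q+1)) (i : Fin (n+2)), n ≤ (i : ℕ) →
      (Fin.cons z (Fin.cons (gv 1) t) : Fin (q+2) → (Fin (n+2) → ℝ)) j'.succ i = 0 := by
    intro z j' i hi
    rw [Fin.cons_succ]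
    induction j' using Fin.cases with
    | zero => rw [Fin.cons_zero]; exact hgvV 1 i hi
    | succ j'' => rw [Fin.cons_succ]; exact hgvV _ i hi
  have hΦv1 : Φ (Fin.cons (e' 0) (Fin.cons (gv 1) t)) = 0 := by
    rw [hΦdef]
    refine phi_vanish n q J _ (0 : Fin (q+2)) fun j hj i hi => ?_
    induction j using Fin.cases with
    | zero => exact absurd rfl hj
    | succ j' => exact htail _ j' i hi
  have hΦv3 : Φ (Fin.cons (gv 0) (Fin.cons (gv 1) t)) = 0 := by
    rw [hΦdef]
    refine phi_vanish n q J _ (0 : Fin (q+2)) fun j hj i hi => ?_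
    induction j using Fin.cases with
    | zero => exact absurd rfl hj
    | succ j' => exact htail _ j' i hi
  have hΦv2 : Φ (Fin.cons (gv 0) (Fin.cons (e' 1) t)) = 0 := by
    rw [hΦdef]
    refine phi_vanish n q J _ ((0 : Fin (q+1)).succ) fun j hj i hi => ?_
    induction j using Fin.cases with
    | zero => rw [Fin.cons_zero]; exact hgvV 0 i hi
    | succ j' =>
      rw [Fin.cons_succ]
      induction j' using Fin.cases with
      | zero => exact absurd rfl hj
      | succ j'' => rw [Fin.cons_succ]; exact hgvV _ i hi
  -- Ψ vanishes on tuples containing e'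
  have hLe' : ∀ j, (LinearMap.funLeft ℝ ℝ (Fin.castLE (Nat.le_add_right n 2))) (e' j)
      = (0 : Fin n → ℝ) := by
    intro j
    funext m
    show e' j (Fin.castLE (Nat.le_add_right n 2) m) = 0
    exact he'V j _ (by simpa using m.isLt)
  have hΨ0 : ∀ (w : Fin (q+2) → (Fin (n+2) → ℝ)) (k : Fin (q+2)),
      (w k = e' 0 ∨ w k = e' 1) → Ψ w = 0 := by
    intro w k hk
    rw [hΨdef, AlternatingMap.compLinearMap_apply]
    refine AlternatingMap.map_coord_zero _ k ?_
    rcases hk with h | h <;> rw [h] <;> exact hLe' _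
  have hΨv1 : Ψ (Fin.cons (e' 0) (Fin.cons (e' 1) t)) = 0 :=
    hΨ0 _ 0 (Or.inl rfl)
  have hΨv2 : Ψ (Fin.cons (e' 0) (Fin.cons (gv 1) t)) = 0 :=
    hΨ0 _ 0 (Or.inl rfl)
  have hΨv3 : Ψ (Fin.cons (gv 0) (Fin.cons (e' 1) t)) = 0 :=
    hΨ0 _ ((0 : Fin (q+1)).succ) (Or.inr rfl)
  have hconsgv : Fin.cons (gv 0) (Fin.cons (gv 1) t) = gv := by
    funext j
    induction j using Fin.cases with
    | zero => rw [Fin.cons_zero]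
    | succ j' =>
      rw [Fin.cons_succ]
      induction j' using Fin.cases with
      | zero => rw [Fin.cons_zero, Fin.succ_zero_eq_one]
      | succ j'' => rw [Fin.cons_succ]
  have hΦξ : Φ ξ = Real.cos (θ 0) * Real.cos (θ 1) * Φ E := by
    rw [hexpand Φ, hΦv1, hΦv2, hΦv3, hEdef]
    ring
  have hΨξ : Ψ ξ = Real.sin (θ 0) * Real.sin (θ 1) * Ψ gv := by
    rw [hexpand Ψ, hΨv1, hΨv2, hΨv3, hconsgv]
    ring
  -- |Φ E| ≤ 1
  have hcross : ∀ (j : Fin 2) (k : Fin (q+2)), stdG (n+2) (e' j) (gv k) = 0 := by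
    intro j k
    rw [stdG_apply]
    refine Finset.sum_eq_zero fun i _ => ?_
    by_cases h : (i : ℕ) < n
    · rw [he'V j i h, zero_mul]
    · rw [hgvV k i (by omega), mul_zero]
  have hcross' : ∀ (k : Fin (q+2)) (j : Fin 2), stdG (n+2) (gv k) (e' j) = 0 :=
    fun k j => (stdG_comm _ _).trans (hcross j k)
  have hE0 : E 0 = e' 0 := rfl
  have hE1 : E ((0 : Fin (q+1)).succ) = e' 1 := rfl
  have hEss : ∀ i : Fin q, E (i.succ.succ) = gv i.succ.succ := fun i => rfl
  have hEon : ∀ a b, stdG (n+2) (E a) (E b) = if a = b then 1 else 0 := by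
    intro a b
    induction a using Fin.cases with
    | zero =>
      induction b using Fin.cases with
      | zero =>
        rw [hE0, if_pos rfl]
        simpa using he'on 0 0
      | succ b' =>
        rw [if_neg (Fin.succ_ne_zero b').symm]
        induction b' using Fin.cases with
        | zero => rw [hE0, hE1]; simpa using he'on 0 1
        | succ b'' => rw [hE0, hEss]; exact hcross 0 _
    | succ a' =>
      induction b using Fin.cases with
      | zero =>
        rw [if_neg (Fin.succ_ne_zero a'), hE0]
        induction a' using Fin.cases with
        | zero => rw [hE1]; simpa using he'on 1 0
        | succ a'' => rw [hEss]; exact hcross' _ 0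
      | succ b' =>
        induction a' using Fin.cases with
        | zero =>
          induction b' using Fin.cases with
          | zero => rw [hE1, if_pos rfl]; simpa using he'on 1 1
          | succ b'' =>
            rw [if_neg (fun hh => by
              have h2 := congrArg Fin.val hh
              simp only [Fin.val_succ, Fin.val_zero] at h2
              omega), hE1, hEss]
            exact hcross 1 _
        | succ a'' =>
          induction b' using Fin.cases with
          | zero =>
            rw [if_neg (fun hh => by
              have h2 := congrArg Fin.val hh
              simp only [Fin.val_succ, Fin.val_zero] at h2
              omega), hEss, hE1]
            exact hcross' _ 1
          | succ b'' =>
            rw [hEss, hEss]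
            exact hgvon _ _
  set P : Matrix (Fin (q+2)) (Fin (n+2)) ℝ :=
    Matrix.of fun i r => if phiIdx n q J i = r then (1:ℝ) else 0 with hPdef
  set Q : Matrix (Fin (q+2)) (Fin (n+2)) ℝ := Matrix.of fun j r => E j r with hQdef
  have hPP : P * Pᵀ = 1 := by
    ext i k
    rw [Matrix.mul_apply, Matrix.one_apply]
    have hterm : ∀ r, P i r * Pᵀ r k = if phiIdx n q J k = r then P i r else 0 := by
      intro r
      show P i r * P k r = _
      by_cases h : phiIdx n q J k = r
      · rw [if_pos h, show P k r = 1 from if_pos h, mul_one]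
      · rw [if_neg h, show P k r = 0 from if_neg h, mul_zero]
    rw [Finset.sum_congr rfl fun r _ => hterm r, Finset.sum_ite_eq]
    simp only [Finset.mem_univ, if_true]
    show (if phiIdx n q J i = phiIdx n q J k then (1:ℝ) else 0) = _
    by_cases h : i = k
    · rw [if_pos (by rw [h]), if_pos h]
    · rw [if_neg (fun hc => h (phiIdx_injective hJ hc)), if_neg h]
  have hQQ : Q * Qᵀ = 1 := by
    ext a b
    rw [Matrix.one_apply, ← hEon a b, stdG_apply, Matrix.mul_apply]
    rfl
  have hMPQ : (Matrix.of fun i j => E j (phiIdx n q J i)) = P * Qᵀ := by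
    ext i j
    rw [Matrix.mul_apply]
    have hterm : ∀ r, P i r * Qᵀ r j = if phiIdx n q J i = r then E j r else 0 := by
      intro r
      show P i r * E j r = _
      by_cases h : phiIdx n q J i = r
      · rw [if_pos h, show P i r = 1 from if_pos h, one_mul]
      · rw [if_neg h, show P i r = 0 from if_neg h, zero_mul]
    rw [Finset.sum_congr rfl fun r _ => hterm r, Finset.sum_ite_eq]
    simp
  have hΦE : |Φ E| ≤ 1 := by
    rw [hΦdef, axisForm_apply, hMPQ]
    exact abs_det_mul_transpose_le_one P Q hPP hQQ
  -- |Ψ gv| ≤ comass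
  have hGramgv : (Matrix.of fun i j : Fin (q+2) => stdG (n+2) (gv i) (gv j)).det = 1 := by
    have h1 : (Matrix.of fun i j : Fin (q+2) => stdG (n+2) (gv i) (gv j))
        = (1 : Matrix (Fin (q+2)) (Fin (q+2)) ℝ) := by
      ext i j
      rw [Matrix.of_apply, hgvon, Matrix.one_apply]
    rw [h1, Matrix.det_one]
  set Cb : ℝ := ∑ r : Fin (q+2) → Fin (n+2), |Ψ (fun i => Pi.single (r i) (1:ℝ))| with hCb
  have hbdd : BddAbove {c | ∃ v : Fin (q+2) → (Fin (n+2) → ℝ),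
      (Matrix.of fun i j : Fin (q+2) => stdG (n+2) (v i) (v j)).det = 1 ∧ Ψ v = c} := by
    refine ⟨Cb, fun c hc => ?_⟩
    obtain ⟨v, hv1, hv2⟩ := hc
    rw [← hv2]
    exact le_trans (le_abs_self _) (comass_bound Ψ v hv1)
  have hmem : Ψ gv ∈ {c | ∃ v : Fin (q+2) → (Fin (n+2) → ℝ),
      (Matrix.of fun i j : Fin (q+2) => stdG (n+2) (v i) (v j)).det = 1 ∧ Ψ v = c} :=
    ⟨gv, hGramgv, rfl⟩
  have hsmul2 : ∀ (a b : ℝ) (x y : Fin (n+2) → ℝ),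
      stdG (n+2) (a • x) (b • y) = a * b * stdG (n+2) x y := by
    intro a b x y
    rw [_root_.map_smul, _root_.map_smul, LinearMap.smul_apply, smul_eq_mul, smul_eq_mul]
    ring
  have hneg : -Ψ gv ∈ {c | ∃ v : Fin (q+2) → (Fin (n+2) → ℝ),
      (Matrix.of fun i j : Fin (q+2) => stdG (n+2) (v i) (v j)).det = 1 ∧ Ψ v = c} := by
    refine ⟨Function.update gv 0 (-(gv 0)), ?_, ?_⟩
    · have hw : ∀ i, Function.update gv 0 (-(gv 0)) i
          = ((if i = (0 : Fin (q+2)) then (-1:ℝ) else 1) • gv i) := by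
        intro i
        by_cases hi : i = 0
        · subst hi
          rw [Function.update_self, if_pos rfl, neg_one_smul]
        · rw [Function.update_of_ne hi, if_neg hi, one_smul]
      have h1 : (Matrix.of fun i j : Fin (q+2) =>
          stdG (n+2) (Function.update gv 0 (-(gv 0)) i) (Function.update gv 0 (-(gv 0)) j))
          = (1 : Matrix (Fin (q+2)) (Fin (q+2)) ℝ) := by
        ext i j
        show stdG (n+2) (Function.update gv 0 (-(gv 0)) i) (Function.update gv 0 (-(gv 0)) j)
          = (1 : Matrix (Fin (q+2)) (Fin (q+2)) ℝ) i j
        rw [hw i, hw j, hsmul2, hgvon, Matrix.one_apply]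
        by_cases h : i = j
        · subst h
          by_cases h0 : i = 0 <;> simp [h0]
        · simp [h]
      rw [h1, Matrix.det_one]
    · have h := AlternatingMap.map_update_neg Ψ gv 0 (gv 0)
      rwa [Function.update_eq_self] at h
  have habs : |Ψ gv| ≤ comass Ψ (stdG (n+2)) := by
    rw [comass]
    rw [abs_le]
    constructor
    · have := le_csSup hbdd hneg
      linarith
    · exact le_csSup hbdd hmem
  set M : ℝ := max 1 (comass Ψ (stdG (n+2))) with hMdef
  have hM1 : (1:ℝ) ≤ M := le_max_left _ _
  have hM0 : (0:ℝ) ≤ M := by linarith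
  have hΦEM : |Φ E| ≤ M := le_trans hΦE hM1
  have hΨgvM : |Ψ gv| ≤ M := le_trans habs (le_max_right _ _)
  refine ⟨?_, ?_, ?_⟩
  · calc |(Φ + Ψ) ξ| = |Real.cos (θ 0) * Real.cos (θ 1) * Φ E
        + Real.sin (θ 0) * Real.sin (θ 1) * Ψ gv| := by
          rw [AlternatingMap.add_apply, hΦξ, hΨξ]
    _ ≤ |Real.cos (θ 0) * Real.cos (θ 1) * Φ E|
        + |Real.sin (θ 0) * Real.sin (θ 1) * Ψ gv| := abs_add_le _ _
    _ = Real.cos (θ 0) * Real.cos (θ 1) * |Φ E|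
        + Real.sin (θ 0) * Real.sin (θ 1) * |Ψ gv| := by
          rw [abs_mul, abs_mul, abs_mul, abs_mul, abs_of_pos hc0, abs_of_pos hc1,
            abs_of_pos hs0, abs_of_pos hs1]
  · calc Real.cos (θ 0) * Real.cos (θ 1) * |Φ E| + Real.sin (θ 0) * Real.sin (θ 1) * |Ψ gv|
        ≤ Real.cos (θ 0) * Real.cos (θ 1) * M + Real.sin (θ 0) * Real.sin (θ 1) * M := by
          have h1 := mul_le_mul_of_nonneg_left hΦEM
            (le_of_lt (mul_pos hc0 hc1))
          have h2 := mul_le_mul_of_nonneg_left hΨgvM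
            (le_of_lt (mul_pos hs0 hs1))
          linarith
    _ = (Real.cos (θ 0) * Real.cos (θ 1) + Real.sin (θ 0) * Real.sin (θ 1)) * M := by ring
    _ = Real.cos (θ 0 - θ 1) * M := by rw [Real.cos_sub]
  · exact mul_le_of_le_one_left hM0 (Real.cos_le_one _)
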